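/- Let G = (V,E) be a cubic graph with n vertices. Construct the SR instance I with agents A ∪ B ∪ V ∪ W ∪ X ∪ Y as in the reduction (with a_j and b_j mutually first choices for 1 ≤ j ≤ 4, and preference lists: v_i: w_i, v_i^1, v_i^2, v_i^3, y_i, ...; w_i: x_i, a_1, a_2, a_3, a_4, v_i, ...; x_i: a_1, y_i, w_i, ...; y_i: v_i, x_i, ...). Then G has a vertex cover of size at most K if and only if I admits a stable matching M with profile p(M) ⪰ ⟨2n−K+8, 2K, n−K, 0, n−K, K⟩ lexicographically. -/

import Mathlib

/-- Agents of the SR instance constructed from a graph with vertex set `V`: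
`a_1..a_4`, `b_1..b_4`, and `v_i, w_i, x_i, y_i` for each vertex `i`. -/
inductive Agent (V : Type) where
  | a (j : Fin 4)
  | b (j : Fin 4)
  | v (i : V)
  | w (i : V)
  | x (i : V)
  | y (i : V)
deriving DecidableEq

noncomputable instance {V : Type} [Fintype V] : Fintype (Agent V) := by
  classical
  exact Fintype.ofInjective
    (fun z : Agent V => match z with
      | .a j => (Sum.inl (Sum.inl j) : (Fin 4 ⊕ Fin 4) ⊕ (V ⊕ V) ⊕ (V ⊕ V))
      | .b j => Sum.inl (Sum.inr j)
      | .v i => Sum.inr (Sum.inl (Sum.inl i))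
      | .w i => Sum.inr (Sum.inl (Sum.inr i))
      | .x i => Sum.inr (Sum.inr (Sum.inl i))
      | .y i => Sum.inr (Sum.inr (Sum.inr i)))
    (by intro z z' h; cases z <;> cases z' <;> simp_all)

/-- `rank` is a valid SR preference profile: each agent strictly ranks all other
agents with ranks `1, ..., #agents − 1`. -/
def ValidRank {V : Type} [Fintype V] [DecidableEq V] (rank : Agent V → Agent V → ℕ) : Prop :=
  ∀ z : Agent V,
    (∀ c c' : Agent V, c ≠ z → c' ≠ z → rank z c = rank z c' → c = c') ∧
    (∀ c : Agent V, c ≠ z → 1 ≤ rank z c ∧ rank z c ≤ Fintype.card (Agent V) - 1)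

/-- The preference-list prefixes prescribed by the reduction (the `...` parts of the
lists are arbitrary). -/
def ReductionPrefs {V : Type} [Fintype V] [DecidableEq V] (G : SimpleGraph V)
    (rank : Agent V → Agent V → ℕ) : Prop :=
  (∀ j : Fin 4, rank (.a j) (.b j) = 1 ∧ rank (.b j) (.a j) = 1) ∧
  (∀ i : V,
    rank (.v i) (.w i) = 1 ∧
    (∀ u : V, G.Adj i u → rank (.v i) (.v u) ∈ ({2, 3, 4} : Set ℕ)) ∧
    rank (.v i) (.y i) = 5 ∧
    rank (.w i) (.x i) = 1 ∧ rank (.w i) (.a 0) = 2 ∧ rank (.w i) (.a 1) = 3 ∧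
    rank (.w i) (.a 2) = 4 ∧ rank (.w i) (.a 3) = 5 ∧ rank (.w i) (.v i) = 6 ∧
    rank (.x i) (.a 0) = 1 ∧ rank (.x i) (.y i) = 2 ∧ rank (.x i) (.w i) = 3 ∧
    rank (.y i) (.v i) = 1 ∧ rank (.y i) (.x i) = 2)

/-- `M` is a (perfect) matching of the agents: a fixed-point-free involution. -/
def IsMatching {V : Type} (M : Agent V → Agent V) : Prop :=
  (∀ z : Agent V, M (M z) = z) ∧ (∀ z : Agent V, M z ≠ z)

/-- `M` is stable: no two agents strictly prefer each other to their partners. -/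
def IsStable {V : Type} (rank : Agent V → Agent V → ℕ) (M : Agent V → Agent V) : Prop :=
  ¬ ∃ z c : Agent V, z ≠ c ∧ rank z c < rank z (M z) ∧ rank c z < rank c (M c)

open Classical in
/-- The profile of a matching: entry `k` counts the agents matched to their `k`th choice. -/
noncomputable def profileOf {V : Type} [Fintype V] [DecidableEq V]
    (rank : Agent V → Agent V → ℕ) (M : Agent V → Agent V) : ℕ → ℤ :=
  fun k => ((Finset.univ.filter (fun z : Agent V => rank z (M z) = k)).card : ℤ)

/-- Lexicographic `≤` on integer sequences. -/
def LexLE (σ p : ℕ → ℤ) : Prop :=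
  σ = p ∨ ∃ k : ℕ, σ k < p k ∧ ∀ j : ℕ, j < k → σ j = p j

/-- The target profile `⟨2n−K+8, 2K, n−K, 0, n−K, K⟩` of the reduction. -/
def targetProfile (n K : ℕ) : ℕ → ℤ := fun k =>
  if k = 1 then 2 * (n : ℤ) - K + 8
  else if k = 2 then 2 * (K : ℤ)
  else if k = 3 then (n : ℤ) - K
  else if k = 4 then 0
  else if k = 5 then (n : ℤ) - K
  else if k = 6 then (K : ℤ)
  else 0

open Finset

lemma agent_card_split {V : Type} [Fintype V] [DecidableEq V] (p : Agent V → Prop)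
    [DecidablePred p] :
    (Finset.univ.filter p).card =
      (Finset.univ.filter fun j : Fin 4 => p (.a j)).card +
      (Finset.univ.filter fun j : Fin 4 => p (.b j)).card +
      ((Finset.univ.filter fun i : V => p (.v i)).card +
      (Finset.univ.filter fun i : V => p (.w i)).card +
      (Finset.univ.filter fun i : V => p (.x i)).card +
      (Finset.univ.filter fun i : V => p (.y i)).card) := by
  classical
  have h : (Finset.univ.filter p) =
      ((Finset.univ.filter fun j : Fin 4 => p (.a j)).image Agent.a ∪
       (Finset.univ.filter fun j : Fin 4 => p (.b j)).image Agent.b) ∪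
      (((Finset.univ.filter fun i : V => p (.v i)).image Agent.v ∪
       (Finset.univ.filter fun i : V => p (.w i)).image Agent.w) ∪
      ((Finset.univ.filter fun i : V => p (.x i)).image Agent.x ∪
       (Finset.univ.filter fun i : V => p (.y i)).image Agent.y)) := by
    ext z
    cases z <;> simp
  rw [h]
  have inja : Function.Injective (Agent.a (V := V)) := fun _ _ h => by injection h
  have injb : Function.Injective (Agent.b (V := V)) := fun _ _ h => by injection h
  have injv : Function.Injective (Agent.v (V := V)) := fun _ _ h => by injection h
  have injw : Function.Injective (Agent.w (V := V)) := fun _ _ h => by injection h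
  have injx : Function.Injective (Agent.x (V := V)) := fun _ _ h => by injection h
  have injy : Function.Injective (Agent.y (V := V)) := fun _ _ h => by injection h
  rw [card_union_of_disjoint, card_union_of_disjoint, card_union_of_disjoint,
      card_union_of_disjoint, card_union_of_disjoint]
  · simp only [card_union_of_disjoint, card_image_of_injective, inja, injb, injv, injw, injx, injy]
    ring
  all_goals (simp only [Finset.disjoint_left, Finset.mem_union, Finset.mem_image,
    Finset.mem_filter]; aesop)

lemma filter_ite_card {V : Type} [Fintype V] [DecidableEq V] (C : Finset V) (a b k : ℕ) :
    (Finset.univ.filter fun i : V => (if i ∈ C then a else b) = k).card =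
      if a = k then (if b = k then Fintype.card V else C.card)
      else (if b = k then Fintype.card V - C.card else 0) := by
  classical
  split_ifs with h1 h2 h3
  · rw [show (Finset.univ.filter fun i : V => (if i ∈ C then a else b) = k) = Finset.univ by
      ext i; simp only [mem_filter, mem_univ, true_and, iff_true]; split_ifs <;> assumption]
    exact Finset.card_univ
  · rw [show (Finset.univ.filter fun i : V => (if i ∈ C then a else b) = k) = C by
      ext i; simp only [mem_filter, mem_univ, true_and]; split_ifs with h <;> simp [h, h1, h2]]
  · rw [show (Finset.univ.filter fun i : V => (if i ∈ C then a else b) = k) = Cᶜ by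
      ext i; simp only [mem_filter, mem_univ, true_and, Finset.mem_compl]
      split_ifs with h <;> simp [h, h1, h3]]
    exact Finset.card_compl C
  · rw [show (Finset.univ.filter fun i : V => (if i ∈ C then a else b) = k) = ∅ by
      ext i; simp only [mem_filter, mem_univ, true_and, Finset.notMem_empty, iff_false]
      split_ifs with h <;> simp [h1, h3]]
    exact Finset.card_empty

/-- The rank that each agent gives its partner in the matching associated to a cover `C`. -/
def prank {V : Type} [DecidableEq V] (C : Finset V) : Agent V → ℕ
  | .a _ => 1
  | .b _ => 1
  | .v i => if i ∈ C then 1 else 5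
  | .w i => if i ∈ C then 6 else 1
  | .x i => if i ∈ C then 2 else 3
  | .y i => if i ∈ C then 2 else 1

lemma profile_formula {V : Type} [Fintype V] [DecidableEq V]
    (rank : Agent V → Agent V → ℕ) (M : Agent V → Agent V) (C : Finset V)
    (hr : ∀ z : Agent V, rank z (M z) = prank C z) (k : ℕ) :
    profileOf rank M k = targetProfile (Fintype.card V) C.card k := by
  classical
  have hcC : C.card ≤ Fintype.card V := by
    simpa using Finset.card_le_univ C
  have h1 : profileOf rank M k
      = (((Finset.univ.filter fun z : Agent V => prank C z = k).card : ℤ)) := by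
    unfold profileOf
    congr 1
    exact congrArg Finset.card (Finset.filter_congr (fun z _ => by rw [hr z]))
  have h4 : (Finset.univ.filter fun _ : Fin 4 => (1 : ℕ) = k).card
      = if 1 = k then 4 else 0 := by
    split_ifs with h
    · rw [Finset.filter_true_of_mem (fun _ _ => h)]; simp
    · rw [Finset.filter_false_of_mem (fun _ _ => h)]; simp
  rw [h1, agent_card_split (fun z : Agent V => prank C z = k)]
  simp only [prank]
  erw [filter_ite_card, filter_ite_card, filter_ite_card, filter_ite_card, h4]
  simp only [targetProfile]
  obtain _|_|_|_|_|_|_|k := k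
  · norm_num
  · norm_num; try omega
  · norm_num; try omega
  · norm_num; try omega
  · norm_num; try omega
  · norm_num; try omega
  · norm_num; try omega
  · have h1' : ∀ m : ℕ, m < 7 → ((m = k + 7) = False) := fun m hm => eq_false (by omega)
    have h2' : ∀ m : ℕ, m < 7 → ((k + 7 = m) = False) := fun m hm => eq_false (by omega)
    simp only [h1' 1 (by norm_num), h1' 2 (by norm_num), h1' 3 (by norm_num),
      h1' 5 (by norm_num), h1' 6 (by norm_num), h2' 1 (by norm_num), h2' 2 (by norm_num),
      h2' 3 (by norm_num), h2' 4 (by norm_num), h2' 5 (by norm_num), h2' 6 (by norm_num),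
      if_false]
    norm_num

lemma neighbor_of_rank {V : Type} [Fintype V] [DecidableEq V] (G : SimpleGraph V)
    [DecidableRel G.Adj] (rank : Agent V → Agent V → ℕ) (hvalid : ValidRank rank)
    {i : V} (hdeg : G.degree i = 3)
    (hadj : ∀ u : V, G.Adj i u → rank (.v i) (.v u) ∈ ({2, 3, 4} : Set ℕ))
    {c : Agent V} (hc : c ≠ .v i) (hr : rank (.v i) c ∈ ({2, 3, 4} : Set ℕ)) :
    ∃ u : V, G.Adj i u ∧ c = .v u := by
  classical
  set f : V → ℕ := fun u => rank (.v i) (.v u) with hf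
  have himg : (G.neighborFinset i).image f = ({2, 3, 4} : Finset ℕ) := by
    apply Finset.eq_of_subset_of_card_le
    · intro r hr'
      rw [Finset.mem_image] at hr'
      obtain ⟨u, hu, rfl⟩ := hr'
      have := hadj u ((SimpleGraph.mem_neighborFinset G i u).1 hu)
      simp only [Set.mem_insert_iff, Set.mem_singleton_iff] at this
      simp only [Finset.mem_insert, Finset.mem_singleton]
      exact this
    · have hinjOn : Set.InjOn f (G.neighborFinset i) := by
        intro u hu u' hu' hff
        simp only [Finset.coe_sort_coe, Finset.mem_coe] at hu hu'
        have hui : u ≠ i := ((SimpleGraph.mem_neighborFinset G i u).1 hu).ne'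
        have hui' : u' ≠ i := ((SimpleGraph.mem_neighborFinset G i u').1 hu').ne'
        have := (hvalid (.v i)).1 (.v u) (.v u') (by simp [hui]) (by simp [hui']) hff
        simpa using this
      rw [Finset.card_image_of_injOn hinjOn, G.card_neighborFinset_eq_degree, hdeg]
      decide
  have hmem : rank (.v i) c ∈ (G.neighborFinset i).image f := by
    rw [himg]
    simp only [Set.mem_insert_iff, Set.mem_singleton_iff] at hr
    simp only [Finset.mem_insert, Finset.mem_singleton]
    exact hr
  obtain ⟨u, hu, hfu⟩ := Finset.mem_image.1 hmem
  have hadj' := (SimpleGraph.mem_neighborFinset G i u).1 hu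
  refine ⟨u, hadj', ?_⟩
  exact (hvalid (.v i)).1 c (.v u) hc (by simp [hadj'.ne']) hfu.symm

lemma classify {V : Type} [Fintype V] [DecidableEq V] (G : SimpleGraph V)
    (rank : Agent V → Agent V → ℕ) (hvalid : ValidRank rank)
    (hprefs : ReductionPrefs G rank) (M : Agent V → Agent V)
    (hM : IsMatching M) (hs : IsStable rank M) :
    (∀ j : Fin 4, M (.a j) = .b j) ∧
    ∀ i : V, (M (.v i) = .w i ∧ M (.w i) = .v i ∧ M (.x i) = .y i ∧ M (.y i) = .x i)
           ∨ (M (.v i) = .y i ∧ M (.y i) = .v i ∧ M (.w i) = .x i ∧ M (.x i) = .w i) := by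
  obtain ⟨hinv, hnf⟩ := hM
  obtain ⟨hab, hg⟩ := hprefs
  have hpos : ∀ z c : Agent V, c ≠ z → 1 ≤ rank z c := fun z c h => ((hvalid z).2 c h).1
  have hinj : ∀ z c c' : Agent V, c ≠ z → c' ≠ z → rank z c = rank z c' → c = c' :=
    fun z => (hvalid z).1
  have hst : ∀ z c : Agent V, z ≠ c → rank z c < rank z (M z) → rank c z < rank c (M c) → False :=
    fun z c h1 h2 h3 => hs ⟨z, c, h1, h2, h3⟩
  have hMeq : ∀ z c : Agent V, M z = c → M c = z := fun z c h => by rw [← h, hinv]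
  have hMne : ∀ z c : Agent V, M z ≠ c → M c ≠ z := fun z c h hc => h (hMeq c z hc)
  have hbnd : ∀ (z c0 : Agent V) (r : ℕ), c0 ≠ z → rank z c0 = r → M z ≠ c0 →
      rank z (M z) ≠ r :=
    fun z c0 r hc0 h0 hMz h => hMz (hinj z (M z) c0 (hnf z) hc0 (h.trans h0.symm))
  have hMa : ∀ j : Fin 4, M (.a j) = .b j := by
    intro j
    by_contra hja
    have hjb : M (.b j) ≠ .a j := hMne _ _ hja
    have h1 := hbnd (.a j) (.b j) 1 (by simp) (hab j).1 hja
    have h2 := hbnd (.b j) (.a j) 1 (by simp) (hab j).2 hjb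
    have p1 := hpos (.a j) (M (.a j)) (hnf _)
    have p2 := hpos (.b j) (M (.b j)) (hnf _)
    exact hst (.a j) (.b j) (by simp) (by rw [(hab j).1]; omega) (by rw [(hab j).2]; omega)
  refine ⟨hMa, fun i => ?_⟩
  obtain ⟨hvw, hadj, hvy, hwx, hwa0, hwa1, hwa2, hwa3, hwv, hxa, hxy, hxw, hyv, hyx⟩ := hg i
  -- partners of a's are b's, so no one else gets an a
  have hxa0 : M (.x i) ≠ .a 0 := fun h => by
    have := hMeq _ _ h; rw [hMa 0] at this; exact (by simp : (Agent.b 0 : Agent V) ≠ .x i) this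
  have hwaj : ∀ j : Fin 4, M (.w i) ≠ .a j := fun j h => by
    have := hMeq _ _ h; rw [hMa j] at this; exact (by simp : (Agent.b j : Agent V) ≠ .w i) this
  by_cases hy : M (.y i) = .v i
  · -- type B
    have hvyi : M (.v i) = .y i := hMeq _ _ hy
    have hwxi : M (.w i) = .x i := by
      by_contra hwx'
      have hxw' : M (.x i) ≠ .w i := hMne _ _ hwx'
      have hxy' : M (.x i) ≠ .y i := fun h => by
        have := hMeq _ _ h; rw [hy] at this
        exact (by simp : (Agent.v i : Agent V) ≠ .x i) this
      have hwv' : M (.w i) ≠ .v i := fun h => by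
        have := hMeq _ _ h; rw [hvyi] at this
        exact (by simp : (Agent.y i : Agent V) ≠ .w i) this
      have n1 := hbnd (.x i) (.a 0) 1 (by simp) hxa hxa0
      have n2 := hbnd (.x i) (.y i) 2 (by simp) hxy hxy'
      have n3 := hbnd (.x i) (.w i) 3 (by simp) hxw hxw'
      have p1 := hpos (.x i) (M (.x i)) (hnf _)
      have m1 := hbnd (.w i) (.x i) 1 (by simp) hwx hwx'
      have m2 := hbnd (.w i) (.a 0) 2 (by simp) hwa0 (hwaj 0)
      have m3 := hbnd (.w i) (.a 1) 3 (by simp) hwa1 (hwaj 1)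
      have m4 := hbnd (.w i) (.a 2) 4 (by simp) hwa2 (hwaj 2)
      have m5 := hbnd (.w i) (.a 3) 5 (by simp) hwa3 (hwaj 3)
      have m6 := hbnd (.w i) (.v i) 6 (by simp) hwv hwv'
      have p2 := hpos (.w i) (M (.w i)) (hnf _)
      exact hst (.x i) (.w i) (by simp) (by rw [hxw]; omega) (by rw [hwx]; omega)
    exact Or.inr ⟨hvyi, hy, hwxi, hMeq _ _ hwxi⟩
  · -- type A
    have hyx' : M (.y i) = .x i := by
      by_contra h
      have hxy' : M (.x i) ≠ .y i := hMne _ _ h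
      have n1 := hbnd (.y i) (.v i) 1 (by simp) hyv hy
      have n2 := hbnd (.y i) (.x i) 2 (by simp) hyx h
      have p1 := hpos (.y i) (M (.y i)) (hnf _)
      have m1 := hbnd (.x i) (.a 0) 1 (by simp) hxa hxa0
      have m2 := hbnd (.x i) (.y i) 2 (by simp) hxy hxy'
      have p2 := hpos (.x i) (M (.x i)) (hnf _)
      exact hst (.y i) (.x i) (by simp) (by rw [hyx]; omega) (by rw [hxy]; omega)
    have hxy2 : M (.x i) = .y i := hMeq _ _ hyx'
    have hvwi : M (.v i) = .w i := by
      by_contra h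
      have hwv' : M (.w i) ≠ .v i := hMne _ _ h
      have n1 := hbnd (.v i) (.w i) 1 (by simp) hvw h
      have p1 := hpos (.v i) (M (.v i)) (hnf _)
      have hwx' : M (.w i) ≠ .x i := fun hh => by
        have := hMeq _ _ hh; rw [hxy2] at this
        exact (by simp : (Agent.y i : Agent V) ≠ .w i) this
      have m1 := hbnd (.w i) (.x i) 1 (by simp) hwx hwx'
      have m2 := hbnd (.w i) (.a 0) 2 (by simp) hwa0 (hwaj 0)
      have m3 := hbnd (.w i) (.a 1) 3 (by simp) hwa1 (hwaj 1)
      have m4 := hbnd (.w i) (.a 2) 4 (by simp) hwa2 (hwaj 2)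
      have m5 := hbnd (.w i) (.a 3) 5 (by simp) hwa3 (hwaj 3)
      have m6 := hbnd (.w i) (.v i) 6 (by simp) hwv hwv'
      have p2 := hpos (.w i) (M (.w i)) (hnf _)
      exact hst (.v i) (.w i) (by simp) (by rw [hvw]; omega) (by rw [hwv]; omega)
    exact Or.inl ⟨hvwi, hMeq _ _ hvwi, hxy2, hyx'⟩

/-- The matching associated to a vertex cover `C`. -/
def coverM {V : Type} [DecidableEq V] (C : Finset V) : Agent V → Agent V
  | .a j => .b j
  | .b j => .a j
  | .v i => if i ∈ C then .w i else .y i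
  | .w i => if i ∈ C then .v i else .x i
  | .x i => if i ∈ C then .y i else .w i
  | .y i => if i ∈ C then .x i else .v i

lemma coverM_isMatching {V : Type} [DecidableEq V] (C : Finset V) :
    IsMatching (coverM (V := V) C) := by
  constructor
  · intro z
    cases z <;> simp only [coverM] <;> split_ifs with h <;> simp [coverM, h]
  · intro z
    cases z <;> simp only [coverM] <;> try split_ifs <;> simp
    all_goals simp

lemma coverM_rank {V : Type} [Fintype V] [DecidableEq V] (G : SimpleGraph V)
    (rank : Agent V → Agent V → ℕ) (hprefs : ReductionPrefs G rank) (C : Finset V) :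
    ∀ z : Agent V, rank z (coverM C z) = prank C z := by
  obtain ⟨hab, hg⟩ := hprefs
  intro z
  cases z with
  | a j => exact (hab j).1
  | b j => exact (hab j).2
  | v i =>
    obtain ⟨hvw, hadj, hvy, _⟩ := hg i
    simp only [coverM, prank]; split_ifs <;> assumption
  | w i =>
    obtain ⟨_, _, _, hwx, _, _, _, _, hwv, _⟩ := hg i
    simp only [coverM, prank]; split_ifs <;> assumption
  | x i =>
    obtain ⟨_, _, _, _, _, _, _, _, _, _, hxy, hxw, _⟩ := hg i
    simp only [coverM, prank]; split_ifs <;> assumption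
  | y i =>
    obtain ⟨_, _, _, _, _, _, _, _, _, _, _, _, hyv, hyx⟩ := hg i
    simp only [coverM, prank]; split_ifs <;> assumption

lemma coverM_stable {V : Type} [Fintype V] [DecidableEq V] (G : SimpleGraph V)
    [DecidableRel G.Adj] (hcubic : ∀ i : V, G.degree i = 3)
    (rank : Agent V → Agent V → ℕ) (hvalid : ValidRank rank)
    (hprefs : ReductionPrefs G rank) (C : Finset V)
    (hcov : ∀ u u' : V, G.Adj u u' → u ∈ C ∨ u' ∈ C) :
    IsStable rank (coverM C) := by
  have hpr := coverM_rank G rank hprefs C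
  obtain ⟨hab, hg⟩ := hprefs
  have hpos : ∀ z c : Agent V, c ≠ z → 1 ≤ rank z c := fun z c h => ((hvalid z).2 c h).1
  have hinj : ∀ z c c' : Agent V, c ≠ z → c' ≠ z → rank z c = rank z c' → c = c' :=
    fun z => (hvalid z).1
  rintro ⟨z, c, hzc, h1, h2⟩
  rw [hpr z] at h1
  rw [hpr c] at h2
  have hcz := hpos z c hzc.symm
  cases z with
  | a j => simp only [prank] at h1; omega
  | b j => simp only [prank] at h1; omega
  | v i =>
    simp only [prank] at h1
    by_cases hiC : i ∈ C
    · rw [if_pos hiC] at h1; omega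
    · rw [if_neg hiC] at h1
      obtain ⟨hvw, hadj, hvy, _⟩ := hg i
      have : rank (.v i) c = 1 ∨ rank (.v i) c ∈ ({2, 3, 4} : Set ℕ) := by
        simp only [Set.mem_insert_iff, Set.mem_singleton_iff]; omega
      rcases this with hr1 | hr234
      · have hc' : c = .w i := hinj (.v i) c (.w i) hzc.symm (by simp) (hr1.trans hvw.symm)
        subst hc'
        obtain ⟨_, _, _, hwx, _, _, _, _, hwv, _⟩ := hg i
        simp only [prank, if_neg hiC] at h2
        rw [hwv] at h2; omega
      · obtain ⟨u, hadj', rfl⟩ := neighbor_of_rank G rank hvalid (hcubic i) hadj hzc.symm hr234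
        have huC : u ∈ C := by
          rcases hcov i u hadj' with h | h
          · exact absurd h hiC
          · exact h
        simp only [prank, if_pos huC] at h2
        have := hpos (.v u) (.v i) (by simp [hadj'.ne])
        omega
  | w i =>
    simp only [prank] at h1
    by_cases hiC : i ∈ C
    · rw [if_pos hiC] at h1
      obtain ⟨_, _, _, hwx, hwa0, hwa1, hwa2, hwa3, hwv, _⟩ := hg i
      have : rank (.w i) c = 1 ∨ rank (.w i) c = 2 ∨ rank (.w i) c = 3 ∨
          rank (.w i) c = 4 ∨ rank (.w i) c = 5 := by omega
      rcases this with hr | hr | hr | hr | hr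
      · have hc' : c = .x i := hinj (.w i) c (.x i) hzc.symm (by simp) (hr.trans hwx.symm)
        subst hc'
        obtain ⟨_, _, _, _, _, _, _, _, _, _, hxy, hxw, _⟩ := hg i
        simp only [prank, if_pos hiC] at h2
        rw [hxw] at h2; omega
      · have hc' : c = .a 0 := hinj (.w i) c (.a 0) hzc.symm (by simp) (hr.trans hwa0.symm)
        subst hc'
        simp only [prank] at h2
        have := hpos (.a 0) (.w i) (by simp)
        omega
      · have hc' : c = .a 1 := hinj (.w i) c (.a 1) hzc.symm (by simp) (hr.trans hwa1.symm)
        subst hc'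
        simp only [prank] at h2
        have := hpos (.a 1) (.w i) (by simp)
        omega
      · have hc' : c = .a 2 := hinj (.w i) c (.a 2) hzc.symm (by simp) (hr.trans hwa2.symm)
        subst hc'
        simp only [prank] at h2
        have := hpos (.a 2) (.w i) (by simp)
        omega
      · have hc' : c = .a 3 := hinj (.w i) c (.a 3) hzc.symm (by simp) (hr.trans hwa3.symm)
        subst hc'
        simp only [prank] at h2
        have := hpos (.a 3) (.w i) (by simp)
        omega
    · rw [if_neg hiC] at h1; omega
  | x i =>
    simp only [prank] at h1
    obtain ⟨_, _, _, _, _, _, _, _, _, hxa, hxy, hxw, _⟩ := hg i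
    by_cases hiC : i ∈ C
    · rw [if_pos hiC] at h1
      have hr : rank (.x i) c = 1 := by omega
      have hc' : c = .a 0 := hinj (.x i) c (.a 0) hzc.symm (by simp) (hr.trans hxa.symm)
      subst hc'
      simp only [prank] at h2
      have := hpos (.a 0) (.x i) (by simp)
      omega
    · rw [if_neg hiC] at h1
      have : rank (.x i) c = 1 ∨ rank (.x i) c = 2 := by omega
      rcases this with hr | hr
      · have hc' : c = .a 0 := hinj (.x i) c (.a 0) hzc.symm (by simp) (hr.trans hxa.symm)
        subst hc'
        simp only [prank] at h2
        have := hpos (.a 0) (.x i) (by simp)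
        omega
      · have hc' : c = .y i := hinj (.x i) c (.y i) hzc.symm (by simp) (hr.trans hxy.symm)
        subst hc'
        obtain ⟨_, _, _, _, _, _, _, _, _, _, _, _, hyv, hyx⟩ := hg i
        simp only [prank, if_neg hiC] at h2
        rw [hyx] at h2; omega
  | y i =>
    simp only [prank] at h1
    by_cases hiC : i ∈ C
    · rw [if_pos hiC] at h1
      obtain ⟨_, _, _, _, _, _, _, _, _, _, _, _, hyv, hyx⟩ := hg i
      have hr : rank (.y i) c = 1 := by omega
      have hc' : c = .v i := hinj (.y i) c (.v i) hzc.symm (by simp) (hr.trans hyv.symm)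
      subst hc'
      obtain ⟨hvw, _, hvy, _⟩ := hg i
      simp only [prank, if_pos hiC] at h2
      rw [hvy] at h2; omega
    · rw [if_neg hiC] at h1; omega

/-- A cubic graph `G` has a vertex cover of size at most `K` iff the SR instance of the
reduction admits a stable matching whose profile is lexicographically at least
`⟨2n−K+8, 2K, n−K, 0, n−K, K⟩`, where `n` is the number of vertices of `G`. -/
theorem stmt_16 {V : Type} [Fintype V] [DecidableEq V] (G : SimpleGraph V)
    [DecidableRel G.Adj] (hcubic : ∀ i : V, G.degree i = 3)
    (rank : Agent V → Agent V → ℕ) (hvalid : ValidRank rank)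
    (hprefs : ReductionPrefs G rank) (K : ℕ) :
    (∃ C : Finset V, C.card ≤ K ∧ ∀ u u' : V, G.Adj u u' → u ∈ C ∨ u' ∈ C) ↔
      (∃ M : Agent V → Agent V, IsMatching M ∧ IsStable rank M ∧
        LexLE (targetProfile (Fintype.card V) K) (profileOf rank M)) := by
  classical
  constructor
  · rintro ⟨C, hCK, hCcov⟩
    refine ⟨coverM C, coverM_isMatching C,
      coverM_stable G hcubic rank hvalid hprefs C hCcov, ?_⟩
    have hprof := profile_formula rank (coverM C) C (coverM_rank G rank hprefs C)
    rcases lt_or_eq_of_le hCK with hlt | heq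
    · right
      refine ⟨1, ?_, ?_⟩
      · rw [hprof 1]; simp only [targetProfile]; norm_num; omega
      · intro j hj
        interval_cases j
        rw [hprof 0]; simp [targetProfile]
    · left
      funext k
      rw [hprof k, heq]
  · rintro ⟨M, hM, hs, hlex⟩
    obtain ⟨hMa, hcl⟩ := classify G rank hvalid hprefs M hM hs
    have hMb : ∀ j : Fin 4, M (.b j) = .a j := fun j => by rw [← hMa j, hM.1]
    set C := Finset.univ.filter (fun i : V => M (.v i) = .w i) with hCdef
    have hmem : ∀ i : V, i ∈ C ↔ M (.v i) = .w i := fun i => by simp [hCdef]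
    obtain ⟨hab, hg⟩ := hprefs
    have hrk : ∀ z : Agent V, rank z (M z) = prank C z := by
      intro z
      cases z with
      | a j => rw [hMa j]; exact (hab j).1
      | b j => rw [hMb j]; exact (hab j).2
      | v i =>
        obtain ⟨hvw, _, hvy, _⟩ := hg i
        rcases hcl i with ⟨h1, _, _, _⟩ | ⟨h1, _, _, _⟩
        · have hiC : i ∈ C := (hmem i).2 h1
          rw [h1]; simp only [prank, if_pos hiC]; exact hvw
        · have hiC : i ∉ C := fun h => by
            rw [(hmem i).1 h] at h1
            exact (by simp : (Agent.y i : Agent V) ≠ .w i) h1.symm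
          rw [h1]; simp only [prank, if_neg hiC]; exact hvy
      | w i =>
        obtain ⟨_, _, _, hwx, _, _, _, _, hwv, _⟩ := hg i
        rcases hcl i with ⟨h1, h2, _, _⟩ | ⟨h1, _, h3, _⟩
        · have hiC : i ∈ C := (hmem i).2 h1
          rw [h2]; simp only [prank, if_pos hiC]; exact hwv
        · have hiC : i ∉ C := fun h => by
            rw [(hmem i).1 h] at h1
            exact (by simp : (Agent.y i : Agent V) ≠ .w i) h1.symm
          rw [h3]; simp only [prank, if_neg hiC]; exact hwx
      | x i =>
        obtain ⟨_, _, _, _, _, _, _, _, _, _, hxy, hxw, _⟩ := hg i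
        rcases hcl i with ⟨h1, _, h3, _⟩ | ⟨h1, _, _, h4⟩
        · have hiC : i ∈ C := (hmem i).2 h1
          rw [h3]; simp only [prank, if_pos hiC]; exact hxy
        · have hiC : i ∉ C := fun h => by
            rw [(hmem i).1 h] at h1
            exact (by simp : (Agent.y i : Agent V) ≠ .w i) h1.symm
          rw [h4]; simp only [prank, if_neg hiC]; exact hxw
      | y i =>
        obtain ⟨_, _, _, _, _, _, _, _, _, _, _, _, hyv, hyx⟩ := hg i
        rcases hcl i with ⟨h1, _, _, h4⟩ | ⟨h1, h2, _, _⟩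
        · have hiC : i ∈ C := (hmem i).2 h1
          rw [h4]; simp only [prank, if_pos hiC]; exact hyx
        · have hiC : i ∉ C := fun h => by
            rw [(hmem i).1 h] at h1
            exact (by simp : (Agent.y i : Agent V) ≠ .w i) h1.symm
          rw [h2]; simp only [prank, if_neg hiC]; exact hyv
    have hprof := profile_formula rank M C hrk
    refine ⟨C, ?_, ?_⟩
    · -- C.card ≤ K from the lexicographic condition
      rcases hlex with heq | ⟨k, hk, hpre⟩
      · have h := congrFun heq 1
        rw [hprof 1] at h
        norm_num [targetProfile] at h
        omega
      · obtain _ | _ | k := k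
        · rw [hprof 0] at hk
          simp [targetProfile] at hk
        · rw [hprof 1] at hk
          norm_num [targetProfile] at hk
          omega
        · have h := hpre 1 (by omega)
          rw [hprof 1] at h
          norm_num [targetProfile] at h
          omega
    · -- C is a vertex cover
      intro u u' hadj
      by_contra hcon
      push_neg at hcon
      obtain ⟨hu, hu'⟩ := hcon
      have hB : M (.v u) = .y u := by
        rcases hcl u with ⟨h1, _⟩ | ⟨h1, _⟩
        · exact absurd ((hmem u).2 h1) hu
        · exact h1
      have hB' : M (.v u') = .y u' := by
        rcases hcl u' with ⟨h1, _⟩ | ⟨h1, _⟩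
        · exact absurd ((hmem u').2 h1) hu'
        · exact h1
      obtain ⟨_, hadj1, hvy1, _⟩ := hg u
      obtain ⟨_, hadj2, hvy2, _⟩ := hg u'
      have hr1 := hadj1 u' hadj
      have hr2 := hadj2 u (hadj.symm)
      simp only [Set.mem_insert_iff, Set.mem_singleton_iff] at hr1 hr2
      exact hs ⟨.v u, .v u', by simp [hadj.ne], by rw [hB, hvy1]; omega,
        by rw [hB', hvy2]; omega⟩
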